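/- For any non-decreasing Boolean function f : {0,1}^n → {0,1}, P(f = 1) ≤ 2·exp(−(1/(2n))·((1−p)·E(|P(f)| | f=1))²). -/

import Mathlib

open Finset Real

/-- The Bernoulli(p) product weight of a configuration `ω ∈ {0,1}^n`. -/
def W (n : ℕ) (p : ℝ) (ω : Fin n → Bool) : ℝ :=
  ∏ i, if ω i then p else 1 - p

/-- Expectation of `g` under the Bernoulli(p) product measure on `{0,1}^n`. -/
def Ex (n : ℕ) (p : ℝ) (g : (Fin n → Bool) → ℝ) : ℝ :=
  ∑ ω : Fin n → Bool, g ω * W n p ω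

/-- `ω` with its `i`-th coordinate set to `1`. -/
def up1 {n : ℕ} (ω : Fin n → Bool) (i : Fin n) : Fin n → Bool :=
  Function.update ω i true

/-- `ω` with its `i`-th coordinate set to `0`. -/
def up0 {n : ℕ} (ω : Fin n → Bool) (i : Fin n) : Fin n → Bool :=
  Function.update ω i false

/-- The random variable `X i (ω) = ω(i)/p − (1−ω(i))/(1−p)`. -/
noncomputable def X (n : ℕ) (p : ℝ) (i : Fin n) (ω : Fin n → Bool) : ℝ :=
  (if ω i then (1:ℝ) else 0) / p - (1 - if ω i then (1:ℝ) else 0) / (1 - p)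

/-- `S_n = X_1 + ⋯ + X_n`. -/
noncomputable def Sn (n : ℕ) (p : ℝ) (ω : Fin n → Bool) : ℝ :=
  ∑ i, X n p i ω

/-- The set of pivotal coordinates of `f` at `ω`. -/
def pivSet {n : ℕ} (f : (Fin n → Bool) → Bool) (ω : Fin n → Bool) : Finset (Fin n) :=
  Finset.univ.filter fun i => f (up1 ω i) ≠ f (up0 ω i)

/-- The real value of a Boolean function. -/
def fval {n : ℕ} (f : (Fin n → Bool) → Bool) (ω : Fin n → Bool) : ℝ :=
  if f ω then 1 else 0

/-- Probability of an event under the Bernoulli(p) product measure. -/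
def Pr (n : ℕ) (p : ℝ) (A : (Fin n → Bool) → Prop) [DecidablePred A] : ℝ :=
  ∑ ω ∈ Finset.univ.filter A, W n p ω

/-- `f` is non-decreasing. -/
def Mono {n : ℕ} (f : (Fin n → Bool) → Bool) : Prop :=
  ∀ (ω : Fin n → Bool) (i : Fin n), f (up0 ω i) ≤ f (up1 ω i)

lemma W_update (n : ℕ) (p : ℝ) (ω : Fin n → Bool) (i : Fin n) (b : Bool) :
    W n p (Function.update ω i b) =
      (if b then p else 1 - p) * ∏ j ∈ Finset.univ.erase i, (if ω j then p else 1 - p) := by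
  unfold W
  calc ∏ j, (if Function.update ω i b j then p else 1 - p)
      = ∏ j, Function.update (fun k => if ω k then p else 1 - p) i
          (if b then p else 1 - p) j :=
        Finset.prod_congr rfl fun j _ =>
          Function.apply_update (fun _ v => if v then p else 1 - p) ω i b j
    _ = _ := by
        rw [Finset.prod_update_of_mem (mem_univ i)]
        rw [Finset.sdiff_singleton_eq_erase]

lemma pair_zero (n : ℕ) (p : ℝ) (f : (Fin n → Bool) → Bool) (hf : Mono f) (i : Fin n)
    (ω : Fin n → Bool) :
    ((((if up1 ω i i then (1:ℝ) else 0) - p) * fval f (up1 ω i) * W n p (up1 ω i)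
      - (1 - p) * (if i ∈ pivSet f (up1 ω i) then (1:ℝ) else 0) * fval f (up1 ω i) * W n p (up1 ω i))
    + (((if up0 ω i i then (1:ℝ) else 0) - p) * fval f (up0 ω i) * W n p (up0 ω i)
      - (1 - p) * (if i ∈ pivSet f (up0 ω i) then (1:ℝ) else 0) * fval f (up0 ω i) * W n p (up0 ω i))) = 0 := by
  have hle := hf ω i
  have hm : ∀ ω' : Fin n → Bool, (i ∈ pivSet f ω') ↔ (f (up1 ω' i) ≠ f (up0 ω' i)) :=
    fun ω' => by rw [pivSet, Finset.mem_filter]; simp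
  simp only [hm]
  simp only [pivSet, Finset.mem_filter, Finset.mem_univ, true_and, up1, up0,
    Function.update_idem, Function.update_self, W_update] at *
  by_cases hab : f (Function.update ω i true) = f (Function.update ω i false)
  · simp [fval, hab]
    split <;> ring
  · have hb : f (Function.update ω i false) = false := by
      revert hab hle; cases f (Function.update ω i true) <;>
        cases f (Function.update ω i false) <;> simp
    have ha : f (Function.update ω i true) = true := by
      revert hab hle; cases f (Function.update ω i true) <;>
        cases f (Function.update ω i false) <;> simp
    simp [fval, ha, hb]

lemma coord_id (n : ℕ) (p : ℝ) (f : (Fin n → Bool) → Bool) (hf : Mono f) (i : Fin n) :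
    ∑ ω : Fin n → Bool, ((if ω i then (1:ℝ) else 0) - p) * fval f ω * W n p ω
      = (1 - p) * ∑ ω : Fin n → Bool, (if i ∈ pivSet f ω then (1:ℝ) else 0) * fval f ω * W n p ω := by
  rw [Finset.mul_sum, ← sub_eq_zero, ← Finset.sum_sub_distrib]
  apply Finset.sum_ninvolution (fun ω => Function.update ω i (!ω i))
  · intro ω
    by_cases hωi : ω i = true
    · have e1 : up1 ω i = ω := by rw [up1, ← hωi, Function.update_eq_self]
      have e2 : Function.update ω i (!ω i) = up0 ω i := by rw [hωi]; rfl
      have := pair_zero n p f hf i ω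
      rw [e1] at this
      rw [e2]
      linarith [this]
    · have hωi' : ω i = false := by revert hωi; cases ω i <;> simp
      have e1 : up0 ω i = ω := by rw [up0, ← hωi', Function.update_eq_self]
      have e2 : Function.update ω i (!ω i) = up1 ω i := by rw [hωi']; rfl
      have := pair_zero n p f hf i ω
      rw [e1] at this
      rw [e2]
      linarith [this]
  · intro ω _
    intro h
    have := congrFun h i
    simp at this
  · intro ω; exact Finset.mem_univ _
  · intro ω
    simp [Function.update_idem, Function.update_self, Bool.not_not, Function.update_eq_self]

lemma card_piv (n : ℕ) (f : (Fin n → Bool) → Bool) (ω : Fin n → Bool) :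
    ∑ i : Fin n, (if i ∈ pivSet f ω then (1:ℝ) else 0) = ((pivSet f ω).card : ℝ) := by
  rw [Finset.sum_ite_mem, Finset.univ_inter]
  simp

lemma key_id (n : ℕ) (p : ℝ) (f : (Fin n → Bool) → Bool) (hf : Mono f) :
    ∑ ω : Fin n → Bool, ((∑ i, (if ω i then (1:ℝ) else 0)) - n * p) * fval f ω * W n p ω
      = (1 - p) * ∑ ω : Fin n → Bool, ((pivSet f ω).card : ℝ) * fval f ω * W n p ω := by
  have h1 : ∀ ω : Fin n → Bool, ((∑ i, (if ω i then (1:ℝ) else 0)) - n * p)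
      = ∑ i, ((if ω i then (1:ℝ) else 0) - p) := by
    intro ω
    rw [Finset.sum_sub_distrib]
    simp [Finset.card_univ, mul_comm]
  calc ∑ ω : Fin n → Bool, ((∑ i, (if ω i then (1:ℝ) else 0)) - n * p) * fval f ω * W n p ω
      = ∑ ω : Fin n → Bool, ∑ i, ((if ω i then (1:ℝ) else 0) - p) * fval f ω * W n p ω := by
        refine Finset.sum_congr rfl fun ω _ => ?_
        rw [h1 ω, Finset.sum_mul, Finset.sum_mul]
    _ = ∑ i, ∑ ω : Fin n → Bool, ((if ω i then (1:ℝ) else 0) - p) * fval f ω * W n p ω :=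
        Finset.sum_comm
    _ = ∑ i, (1 - p) * ∑ ω : Fin n → Bool, (if i ∈ pivSet f ω then (1:ℝ) else 0) * fval f ω * W n p ω :=
        Finset.sum_congr rfl fun i _ => coord_id n p f hf i
    _ = (1 - p) * ∑ ω : Fin n → Bool, (∑ i, (if i ∈ pivSet f ω then (1:ℝ) else 0)) * fval f ω * W n p ω := by
        rw [← Finset.mul_sum, Finset.sum_comm]
        congr 1
        refine Finset.sum_congr rfl fun ω _ => ?_
        rw [Finset.sum_mul, Finset.sum_mul]
    _ = (1 - p) * ∑ ω : Fin n → Bool, ((pivSet f ω).card : ℝ) * fval f ω * W n p ω := by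
        congr 1
        exact Finset.sum_congr rfl fun ω _ => by rw [card_piv]

lemma hoeff_factor (p : ℝ) (hp0 : 0 < p) (hp1 : p < 1) (l : ℝ) :
    p * Real.exp (l * (1 - p)) + (1 - p) * Real.exp (l * (0 - p)) ≤ Real.exp (l ^ 2 / 2) := by
  have h1 : Real.exp (l * (1 - p)) ≤ (p/2) * Real.exp (-l) + ((2-p)/2) * Real.exp l := by
    have := convexOn_exp.2 (Set.mem_univ (-l)) (Set.mem_univ l)
      (show (0:ℝ) ≤ p/2 by linarith) (show (0:ℝ) ≤ (2-p)/2 by linarith)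
      (show p/2 + (2-p)/2 = 1 by ring)
    simp only [smul_eq_mul] at this
    rw [show p/2 * -l + (2-p)/2 * l = l*(1-p) by ring] at this
    exact this
  have h2 : Real.exp (l * (0 - p)) ≤ ((1+p)/2) * Real.exp (-l) + ((1-p)/2) * Real.exp l := by
    have := convexOn_exp.2 (Set.mem_univ (-l)) (Set.mem_univ l)
      (show (0:ℝ) ≤ (1+p)/2 by linarith) (show (0:ℝ) ≤ (1-p)/2 by linarith)
      (show (1+p)/2 + (1-p)/2 = 1 by ring)
    simp only [smul_eq_mul] at this
    rw [show (1+p)/2 * -l + (1-p)/2 * l = l*(0-p) by ring] at this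
    exact this
  have hcosh : Real.cosh l ≤ Real.exp (l^2/2) := by
    simpa using Real.cosh_le_exp_half_sq l
  rw [Real.cosh_eq] at hcosh
  nlinarith [mul_le_mul_of_nonneg_left h1 hp0.le,
    mul_le_mul_of_nonneg_left h2 (by linarith : (0:ℝ) ≤ 1 - p), hcosh]

lemma mgf_bound (n : ℕ) (p : ℝ) (hp0 : 0 < p) (hp1 : p < 1) (l : ℝ) :
    ∑ ω : Fin n → Bool, Real.exp (l * ((∑ i, (if ω i then (1:ℝ) else 0)) - n * p)) * W n p ω
      ≤ Real.exp (n * l ^ 2 / 2) := by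
  have hpt : ∀ ω : Fin n → Bool,
      Real.exp (l * ((∑ i, (if ω i then (1:ℝ) else 0)) - n * p)) * W n p ω
        = ∏ i, (Real.exp (l * ((if ω i then (1:ℝ) else 0) - p)) * (if ω i then p else 1 - p)) := by
    intro ω
    have e : (∑ i, l * ((if ω i then (1:ℝ) else 0) - p))
        = l * ((∑ i, (if ω i then (1:ℝ) else 0)) - n * p) := by
      rw [← Finset.mul_sum, Finset.sum_sub_distrib, Finset.sum_const, Finset.card_univ,
        Fintype.card_fin, nsmul_eq_mul]
    rw [← e, Real.exp_sum, W, Finset.prod_mul_distrib]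
  calc ∑ ω : Fin n → Bool, Real.exp (l * ((∑ i, (if ω i then (1:ℝ) else 0)) - n * p)) * W n p ω
      = ∑ ω : Fin n → Bool,
          ∏ i, (Real.exp (l * ((if ω i then (1:ℝ) else 0) - p)) * (if ω i then p else 1 - p)) :=
        Finset.sum_congr rfl fun ω _ => hpt ω
    _ = ∏ i : Fin n, ∑ b : Bool,
          (Real.exp (l * ((if b then (1:ℝ) else 0) - p)) * (if b then p else 1 - p)) :=
        (Fintype.prod_sum (κ := fun _ : Fin n => Bool)
          (fun i b => Real.exp (l * ((if b then (1:ℝ) else 0) - p)) * (if b then p else 1 - p))).symm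
    _ ≤ ∏ _i : Fin n, Real.exp (l ^ 2 / 2) := by
        apply Finset.prod_le_prod
        · intro i _
          apply Finset.sum_nonneg
          intro b _
          apply mul_nonneg (Real.exp_nonneg _)
          cases b <;> simp <;> linarith
        · intro i _
          rw [Fintype.sum_bool]
          have := hoeff_factor p hp0 hp1 l
          simp only [if_true, if_false, ite_true, ite_false]
          calc Real.exp (l * (1 - p)) * p + Real.exp (l * (0 - p)) * (1 - p)
              = p * Real.exp (l * (1 - p)) + (1 - p) * Real.exp (l * (0 - p)) := by ring
            _ ≤ _ := this
    _ = Real.exp (n * l ^ 2 / 2) := by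
        rw [Finset.prod_const, Finset.card_univ, Fintype.card_fin, ← Real.exp_nat_mul]
        ring_nf

lemma W_nonneg (n : ℕ) (p : ℝ) (hp0 : 0 < p) (hp1 : p < 1) (ω : Fin n → Bool) :
    0 ≤ W n p ω := by
  apply Finset.prod_nonneg
  intro i _
  split <;> linarith

lemma fval_nonneg {n : ℕ} (f : (Fin n → Bool) → Bool) (ω : Fin n → Bool) : 0 ≤ fval f ω := by
  rw [fval]; split <;> norm_num

lemma Pr_eq (n : ℕ) (p : ℝ) (f : (Fin n → Bool) → Bool) :
    Pr n p (fun ω => f ω = true) = ∑ ω : Fin n → Bool, fval f ω * W n p ω := by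
  rw [Pr, Finset.sum_filter]
  exact Finset.sum_congr rfl fun ω _ => by by_cases h : f ω = true <;> simp [fval, h]

theorem stmt17 (n : ℕ) (hn : 1 ≤ n) (p : ℝ) (hp0 : 0 < p) (hp1 : p < 1)
    (f : (Fin n → Bool) → Bool) (hf : Mono f)
    (hpos : 0 < Pr n p (fun ω => f ω = true)) :
    Pr n p (fun ω => f ω = true) ≤
      2 * Real.exp (-(1 / (2 * n)) *
        ((1 - p) *
          (Ex n p (fun ω => ((pivSet f ω).card : ℝ) * fval f ω) /
            Pr n p (fun ω => f ω = true))) ^ 2) := by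
  have hnR : (0:ℝ) < n := by exact_mod_cast hn
  set PrA := Pr n p (fun ω => f ω = true) with hPrA
  set Epiv := Ex n p (fun ω => ((pivSet f ω).card : ℝ) * fval f ω) with hEpiv
  set c := (1 - p) * (Epiv / PrA) with hc
  set l := c / n with hl
  have hW := W_nonneg n p hp0 hp1
  have hPr : PrA = ∑ ω : Fin n → Bool, fval f ω * W n p ω := Pr_eq n p f
  have hkey : ∑ ω : Fin n → Bool, ((∑ i, (if ω i then (1:ℝ) else 0)) - n * p) * fval f ω * W n p ω
      = c * PrA := by
    rw [key_id n p f hf, hc, hEpiv, Ex]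
    rw [mul_assoc, div_mul_cancel₀ _ hpos.ne']
  have h1 : PrA * Real.exp (l * c)
      ≤ ∑ ω : Fin n → Bool,
          Real.exp (l * ((∑ i, (if ω i then (1:ℝ) else 0)) - n * p)) * fval f ω * W n p ω := by
    have hpt : ∀ ω : Fin n → Bool,
        Real.exp (l * c) * ((1 + l * (((∑ i, (if ω i then (1:ℝ) else 0)) - n * p) - c))
            * (fval f ω * W n p ω))
          ≤ Real.exp (l * ((∑ i, (if ω i then (1:ℝ) else 0)) - n * p)) * fval f ω * W n p ω := by
      intro ω
      have hfW : 0 ≤ fval f ω * W n p ω := mul_nonneg (fval_nonneg f ω) (hW ω)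
      have hexp := Real.add_one_le_exp
        (l * (((∑ i, (if ω i then (1:ℝ) else 0)) - n * p) - c))
      calc Real.exp (l * c) * ((1 + l * (((∑ i, (if ω i then (1:ℝ) else 0)) - n * p) - c))
              * (fval f ω * W n p ω))
          ≤ Real.exp (l * c) *
              (Real.exp (l * (((∑ i, (if ω i then (1:ℝ) else 0)) - n * p) - c))
                * (fval f ω * W n p ω)) := by
            apply mul_le_mul_of_nonneg_left _ (Real.exp_nonneg _)
            apply mul_le_mul_of_nonneg_right _ hfW
            linarith
        _ = Real.exp (l * ((∑ i, (if ω i then (1:ℝ) else 0)) - n * p)) * fval f ω * W n p ω := by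
            rw [← mul_assoc, ← Real.exp_add, mul_assoc]
            congr 2
            ring
    calc PrA * Real.exp (l * c)
        = ∑ ω : Fin n → Bool,
            Real.exp (l * c) * ((1 + l * (((∑ i, (if ω i then (1:ℝ) else 0)) - n * p) - c))
              * (fval f ω * W n p ω)) := by
          have expand : ∀ ω : Fin n → Bool,
              Real.exp (l * c) * ((1 + l * (((∑ i, (if ω i then (1:ℝ) else 0)) - n * p) - c))
                * (fval f ω * W n p ω))
              = Real.exp (l * c) * (fval f ω * W n p ω)
                + (Real.exp (l * c) * l)
                    * (((∑ i, (if ω i then (1:ℝ) else 0)) - n * p) * fval f ω * W n p ω)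
                - (Real.exp (l * c) * (l * c)) * (fval f ω * W n p ω) := by
            intro ω; ring
          rw [Finset.sum_congr rfl fun ω _ => expand ω]
          rw [Finset.sum_sub_distrib, Finset.sum_add_distrib, ← Finset.mul_sum, ← Finset.mul_sum,
            ← Finset.mul_sum, ← hPr, hkey]
          ring
      _ ≤ _ := Finset.sum_le_sum fun ω _ => hpt ω
  have h2 : ∑ ω : Fin n → Bool,
        Real.exp (l * ((∑ i, (if ω i then (1:ℝ) else 0)) - n * p)) * fval f ω * W n p ω
      ≤ ∑ ω : Fin n → Bool,
          Real.exp (l * ((∑ i, (if ω i then (1:ℝ) else 0)) - n * p)) * W n p ω := by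
    apply Finset.sum_le_sum
    intro ω _
    rw [mul_assoc]
    apply mul_le_mul_of_nonneg_left _ (Real.exp_nonneg _)
    calc fval f ω * W n p ω ≤ 1 * W n p ω := by
          apply mul_le_mul_of_nonneg_right _ (hW ω)
          rw [fval]; split <;> norm_num
      _ = W n p ω := one_mul _
  have h3 := mgf_bound n p hp0 hp1 l
  have hchain : PrA * Real.exp (l * c) ≤ Real.exp (n * l ^ 2 / 2) :=
    le_trans h1 (le_trans h2 h3)
  have hfinal : PrA ≤ Real.exp (-(1 / (2 * n)) * c ^ 2) := by
    have hexpeq : Real.exp (n * l ^ 2 / 2) * Real.exp (-(l * c))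
        = Real.exp (-(1 / (2 * n)) * c ^ 2) := by
      rw [← Real.exp_add]
      congr 1
      rw [hl]
      field_simp
      ring
    calc PrA = PrA * Real.exp (l * c) * Real.exp (-(l * c)) := by
          rw [mul_assoc, ← Real.exp_add]
          simp
      _ ≤ Real.exp (n * l ^ 2 / 2) * Real.exp (-(l * c)) :=
          mul_le_mul_of_nonneg_right hchain (Real.exp_nonneg _)
      _ = Real.exp (-(1 / (2 * n)) * c ^ 2) := hexpeq
  calc PrA ≤ Real.exp (-(1 / (2 * n)) * c ^ 2) := hfinal
    _ ≤ 2 * Real.exp (-(1 / (2 * n)) * c ^ 2) := by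
        have := Real.exp_pos (-(1 / (2 * n)) * c ^ 2)
        linarith
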